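/- (Shrinkage identity for dithered quantization.) Let n ≥ 1, let U ∈ ℝ^{n×n} be invertible, and let X, W, e be mutually independent ℝⁿ-valued random vectors with finite second moments such that E[X] = 0, E[X Xᵀ] = UᵀU =: Σ_X, E[W Wᵀ] = σ_W²·I_n, and E[e] = 0. For β ∈ ℝ set Ŵ = β·(W + U^{−1}e). Then (1/n)·E[(Xᵀ(W − Ŵ))²] = (1−β)²·σ_W²·tr(Σ_X)/n + β²·(1/n)·E[‖e‖²]. -/

import Mathlib

open MeasureTheory ProbabilityTheory Finset
open scoped ENNReal

theorem mul_L2_integrable {Ω : Type*} [MeasurableSpace Ω] {μ : Measure Ω}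
    {f g : Ω → ℝ} (hf : MemLp f 2 μ) (hg : MemLp g 2 μ) :
    Integrable (fun ω => f ω * g ω) μ := by
  have h22 : (2:ℝ≥0∞)/2 = 1 := ENNReal.div_self (by norm_num) (by norm_num)
  have hpqr : (1:ℝ≥0∞)/1 = 1/2 + 1/2 := by
    rw [ENNReal.div_add_div_same, one_add_one_eq_two, h22, one_div_one]
  have h := hf.smul (E := ℝ) (𝕜 := ℝ) (p := 2) (q := 2) (r := 1) hg
  have := memLp_one_iff_integrable.mp h
  simpa [smul_eq_mul, mul_comm, Pi.mul_def] using this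

theorem sum4_swap {n : ℕ} (f : Fin n → Fin n → Fin n → Fin n → ℝ) :
    ∑ a, ∑ b, ∑ i, ∑ j, f a b i j = ∑ i, ∑ j, ∑ a, ∑ b, f a b i j :=
  calc ∑ a, ∑ b, ∑ i, ∑ j, f a b i j
      = ∑ a, ∑ i, ∑ b, ∑ j, f a b i j :=
        Finset.sum_congr rfl fun a _ => Finset.sum_comm
    _ = ∑ i, ∑ a, ∑ b, ∑ j, f a b i j := Finset.sum_comm
    _ = ∑ i, ∑ a, ∑ j, ∑ b, f a b i j :=
        Finset.sum_congr rfl fun i _ => Finset.sum_congr rfl fun a _ => Finset.sum_comm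
    _ = ∑ i, ∑ j, ∑ a, ∑ b, f a b i j :=
        Finset.sum_congr rfl fun i _ => Finset.sum_comm

/-- shrinkage identity for dithered quantization: for mutually
independent `X, W, e` with `E[X] = 0`, `E[XXᵀ] = UᵀU = Σ_X`, `E[WWᵀ] = σ_W²·I`,
`E[e] = 0`, finite second moments, and `Ŵ = β(W + U⁻¹e)`, one has
`(1/n)·E[(Xᵀ(W−Ŵ))²] = (1−β)²σ_W²·tr(Σ_X)/n + β²·(1/n)·E[‖e‖²]`. -/
theorem shrinkage_identity {n : ℕ} (hn : 1 ≤ n)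
    {Ω : Type*} [MeasurableSpace Ω] (μ : Measure Ω) [IsProbabilityMeasure μ]
    (X W e : Ω → (Fin n → ℝ))
    (hXm : Measurable X) (hWm : Measurable W) (hem : Measurable e)
    (hindep : iIndepFun ![X, W, e] μ)
    (hX2 : ∀ i, MemLp (fun ω => X ω i) 2 μ)
    (hW2 : ∀ i, MemLp (fun ω => W ω i) 2 μ)
    (he2 : ∀ i, MemLp (fun ω => e ω i) 2 μ)
    (U : Matrix (Fin n) (Fin n) ℝ) (hU : IsUnit U.det)
    (hXmean : ∀ i, ∫ ω, X ω i ∂μ = 0)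
    (hXcov : ∀ i j, ∫ ω, X ω i * X ω j ∂μ = (U.transpose * U) i j)
    (σW : ℝ)
    (hWcov : ∀ i j, ∫ ω, W ω i * W ω j ∂μ = if i = j then σW ^ 2 else 0)
    (hemean : ∀ i, ∫ ω, e ω i ∂μ = 0)
    (β : ℝ) :
    (1 / (n : ℝ)) * ∫ ω,
        (∑ i, X ω i * (W ω i - β * (W ω i + (U⁻¹.mulVec (e ω)) i))) ^ 2 ∂μ =
      (1 - β) ^ 2 * σW ^ 2 * (U.transpose * U).trace / n +
        β ^ 2 * ((1 / (n : ℝ)) * ∫ ω, ∑ i, (e ω i) ^ 2 ∂μ) := by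
  classical
  set M : Matrix (Fin n) (Fin n) ℝ := U⁻¹ with hMdef
  set S : Ω → Fin n → ℝ := fun ω i => ∑ k, M i k * e ω k with hSdef
  set Y : Ω → Fin n → ℝ := fun ω i => (1 - β) * W ω i - β * S ω i with hYdef
  -- rewrite the integrand
  have hrw : ∀ ω, (∑ i, X ω i * (W ω i - β * (W ω i + (M.mulVec (e ω)) i)))
      = ∑ i, X ω i * Y ω i := by
    intro ω
    refine Finset.sum_congr rfl fun i _ => ?_
    have hmv : M.mulVec (e ω) i = S ω i := by
      simp [Matrix.mulVec, dotProduct, hSdef]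
    rw [hmv, hYdef]
    ring
  -- L² facts
  have hS2 : ∀ i, MemLp (fun ω => S ω i) 2 μ := by
    intro i
    simp only [hSdef]
    exact memLp_finset_sum _ fun k _ => (he2 k).const_mul _
  have hY2 : ∀ i, MemLp (fun ω => Y ω i) 2 μ := by
    intro i
    simp only [hYdef]
    exact ((hW2 i).const_mul (1 - β)).sub ((hS2 i).const_mul β)
  -- integrability of pairwise products
  have hXX : ∀ i j, Integrable (fun ω => X ω i * X ω j) μ :=
    fun i j => mul_L2_integrable (hX2 i) (hX2 j)
  have hYY : ∀ i j, Integrable (fun ω => Y ω i * Y ω j) μ :=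
    fun i j => mul_L2_integrable (hY2 i) (hY2 j)
  have hWW : ∀ i j, Integrable (fun ω => W ω i * W ω j) μ :=
    fun i j => mul_L2_integrable (hW2 i) (hW2 j)
  have hWSint : ∀ i j, Integrable (fun ω => W ω i * S ω j) μ :=
    fun i j => mul_L2_integrable (hW2 i) (hS2 j)
  have hSSint : ∀ i j, Integrable (fun ω => S ω i * S ω j) μ :=
    fun i j => mul_L2_integrable (hS2 i) (hS2 j)
  have hee : ∀ a b, Integrable (fun ω => e ω a * e ω b) μ :=
    fun a b => mul_L2_integrable (he2 a) (he2 b)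
  have heInt : ∀ a, Integrable (fun ω => e ω a) μ :=
    fun a => (he2 a).integrable one_le_two
  -- independence facts
  have hmeas3 : ∀ i : Fin 3, Measurable (![X, W, e] i) := by
    intro i; fin_cases i <;> simpa
  have hXP : IndepFun X (fun ω => (W ω, e ω)) μ := by
    have h := (hindep.indepFun_prodMk hmeas3 1 2 0 (by decide) (by decide)).symm
    simpa using h
  have hWE : IndepFun W e μ := by
    have h := hindep.indepFun (i := 1) (j := 2) (by decide)
    simpa using h
  have hXYindep : ∀ i j k l,
      IndepFun (fun ω => X ω i * X ω j) (fun ω => Y ω k * Y ω l) μ := by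
    intro i j k l
    have hφ : Measurable fun v : Fin n → ℝ => v i * v j :=
      (measurable_pi_apply i).mul (measurable_pi_apply j)
    have hψ : Measurable fun p : (Fin n → ℝ) × (Fin n → ℝ) =>
        ((1 - β) * p.1 k - β * ∑ m, M k m * p.2 m) *
          ((1 - β) * p.1 l - β * ∑ m, M l m * p.2 m) := by fun_prop
    have h := hXP.comp hφ hψ
    exact h
  have hWSindep : ∀ k l, IndepFun (fun ω => W ω k) (fun ω => S ω l) μ := by
    intro k l
    have hψ : Measurable fun v : Fin n → ℝ => ∑ b, M l b * v b := by fun_prop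
    have h := hWE.comp (measurable_pi_apply k) hψ
    exact h
  -- mean-zero facts
  have hS0 : ∀ l, ∫ ω, S ω l ∂μ = 0 := by
    intro l
    simp only [hSdef]
    rw [integral_finset_sum _ fun b _ => (heInt b).const_mul _]
    simp [integral_const_mul, hemean]
  have hWS0 : ∀ k l, ∫ ω, W ω k * S ω l ∂μ = 0 := by
    intro k l
    rw [(hWSindep k l).integral_fun_mul_eq_mul_integral (hW2 k).aestronglyMeasurable
      (hS2 l).aestronglyMeasurable, hS0, mul_zero]
  -- second moments of S
  have hSS : ∀ k l, ∫ ω, S ω k * S ω l ∂μ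
      = ∑ a, ∑ b, M k a * M l b * ∫ ω, e ω a * e ω b ∂μ := by
    intro k l
    have hpt : ∀ ω, S ω k * S ω l
        = ∑ a, ∑ b, M k a * M l b * (e ω a * e ω b) := by
      intro ω
      simp only [hSdef]
      rw [Finset.sum_mul_sum]
      exact Finset.sum_congr rfl fun a _ => Finset.sum_congr rfl fun b _ => by ring
    simp only [hpt]
    rw [integral_finset_sum _ fun a _ =>
      integrable_finset_sum _ fun b _ => (hee a b).const_mul _]
    refine Finset.sum_congr rfl fun a _ => ?_
    rw [integral_finset_sum _ fun b _ => (hee a b).const_mul _]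
    exact Finset.sum_congr rfl fun b _ => integral_const_mul _ _
  -- second moments of Y
  have hYint : ∀ k l, ∫ ω, Y ω k * Y ω l ∂μ =
      (1 - β) ^ 2 * (if k = l then σW ^ 2 else 0)
        + β ^ 2 * ∑ a, ∑ b, M k a * M l b * ∫ ω, e ω a * e ω b ∂μ := by
    intro k l
    have hpt : ∀ ω, Y ω k * Y ω l =
        (1 - β) ^ 2 * (W ω k * W ω l) - (1 - β) * β * (W ω k * S ω l)
          - (1 - β) * β * (W ω l * S ω k) + β ^ 2 * (S ω k * S ω l) := by
      intro ω; simp only [hYdef]; ring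
    simp only [hpt]
    have i1 : Integrable (fun ω => (1 - β) ^ 2 * (W ω k * W ω l)) μ :=
      (hWW k l).const_mul _
    have i2 : Integrable (fun ω => (1 - β) * β * (W ω k * S ω l)) μ :=
      (hWSint k l).const_mul _
    have i3 : Integrable (fun ω => (1 - β) * β * (W ω l * S ω k)) μ :=
      (hWSint l k).const_mul _
    have i4 : Integrable (fun ω => β ^ 2 * (S ω k * S ω l)) μ :=
      (hSSint k l).const_mul _
    have i12 : Integrable (fun ω => (1 - β) ^ 2 * (W ω k * W ω l)
        - (1 - β) * β * (W ω k * S ω l)) μ := i1.sub i2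
    have i123 : Integrable (fun ω => (1 - β) ^ 2 * (W ω k * W ω l)
        - (1 - β) * β * (W ω k * S ω l) - (1 - β) * β * (W ω l * S ω k)) μ := i12.sub i3
    rw [integral_add i123 i4, integral_sub i12 i3,
      integral_sub i1 i2, integral_const_mul, integral_const_mul, integral_const_mul,
      integral_const_mul, hWcov k l, hWS0 k l, hWS0 l k, hSS k l]
    ring
  -- expand the square
  have hsq : ∀ ω, (∑ i, X ω i * Y ω i) ^ 2
      = ∑ i, ∑ j, (X ω i * X ω j) * (Y ω i * Y ω j) := by
    intro ω
    rw [sq, Finset.sum_mul_sum]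
    exact Finset.sum_congr rfl fun i _ => Finset.sum_congr rfl fun j _ => by ring
  have hTermInt : ∀ i j, Integrable (fun ω => (X ω i * X ω j) * (Y ω i * Y ω j)) μ :=
    fun i j => (hXYindep i j i j).integrable_mul (hXX i j) (hYY i j)
  -- the main expansion of the integral
  have hmain : ∫ ω, (∑ i, X ω i * Y ω i) ^ 2 ∂μ
      = ∑ i, ∑ j, (U.transpose * U) i j *
          ((1 - β) ^ 2 * (if i = j then σW ^ 2 else 0)
            + β ^ 2 * ∑ a, ∑ b, M i a * M j b * ∫ ω, e ω a * e ω b ∂μ) := by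
    simp only [hsq]
    rw [integral_finset_sum _ fun i _ =>
      integrable_finset_sum _ fun j _ => hTermInt i j]
    refine Finset.sum_congr rfl fun i _ => ?_
    rw [integral_finset_sum _ fun j _ => hTermInt i j]
    refine Finset.sum_congr rfl fun j _ => ?_
    rw [(hXYindep i j i j).integral_fun_mul_eq_mul_integral (hXX i j).aestronglyMeasurable
      (hYY i j).aestronglyMeasurable, hXcov i j, hYint i j]
  -- matrix identity
  have hUM : U * M = 1 := Matrix.mul_nonsing_inv U hU
  have hMat : M.transpose * (U.transpose * U) * M = 1 := by
    calc M.transpose * (U.transpose * U) * M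
        = (M.transpose * U.transpose) * (U * M) := by
          rw [Matrix.mul_assoc, Matrix.mul_assoc, Matrix.mul_assoc]
      _ = (U * M).transpose * (U * M) := by rw [Matrix.transpose_mul]
      _ = 1 := by rw [hUM]; simp
  have hkey : ∀ a b, (∑ i, ∑ j, (U.transpose * U) i j * (M i a * M j b))
      = (1 : Matrix (Fin n) (Fin n) ℝ) a b := by
    intro a b
    calc ∑ i, ∑ j, (U.transpose * U) i j * (M i a * M j b)
        = ∑ i, M.transpose a i * ((U.transpose * U) * M) i b := by
          refine Finset.sum_congr rfl fun i _ => ?_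
          conv_rhs => rw [Matrix.transpose_apply, Matrix.mul_apply, Finset.mul_sum]
          exact Finset.sum_congr rfl fun j _ => by ring
      _ = (M.transpose * ((U.transpose * U) * M)) a b := (Matrix.mul_apply).symm
      _ = (1 : Matrix (Fin n) (Fin n) ℝ) a b := by rw [← Matrix.mul_assoc, hMat]
  -- the big algebraic simplification
  have hsplit : (∑ i, ∑ j, (U.transpose * U) i j *
      ((1 - β) ^ 2 * (if i = j then σW ^ 2 else 0)
        + β ^ 2 * ∑ a, ∑ b, M i a * M j b * ∫ ω, e ω a * e ω b ∂μ))
      = (1 - β) ^ 2 * σW ^ 2 * (U.transpose * U).trace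
        + β ^ 2 * ∑ a, ∫ ω, e ω a * e ω a ∂μ := by
    simp only [mul_add, Finset.sum_add_distrib]
    congr 1
    · -- diagonal term
      have h1 : ∀ i : Fin n, ∑ j, (U.transpose * U) i j *
          ((1 - β) ^ 2 * (if i = j then σW ^ 2 else 0))
          = (1 - β) ^ 2 * σW ^ 2 * (U.transpose * U) i i := by
        intro i
        rw [Finset.sum_eq_single i]
        · rw [if_pos rfl]; ring
        · intro j _ hji
          simp [Ne.symm hji]
        · simp
      rw [Finset.sum_congr rfl fun i _ => h1 i]
      have htr : (U.transpose * U).trace = ∑ i, (U.transpose * U) i i := by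
        simp [Matrix.trace, Matrix.diag]
      rw [htr, Finset.mul_sum]
    · -- noise term
      have h2 : ∀ i j : Fin n, (U.transpose * U) i j *
          (β ^ 2 * ∑ a, ∑ b, M i a * M j b * ∫ ω, e ω a * e ω b ∂μ)
          = ∑ a, ∑ b, ((U.transpose * U) i j * (M i a * M j b)) *
              (β ^ 2 * ∫ ω, e ω a * e ω b ∂μ) := by
        intro i j
        simp only [Finset.mul_sum]
        exact Finset.sum_congr rfl fun a _ => Finset.sum_congr rfl fun b _ => by ring
      have h2' : (∑ i, ∑ j, (U.transpose * U) i j *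
          (β ^ 2 * ∑ a, ∑ b, M i a * M j b * ∫ ω, e ω a * e ω b ∂μ))
          = ∑ i, ∑ j, ∑ a, ∑ b, ((U.transpose * U) i j * (M i a * M j b)) *
              (β ^ 2 * ∫ ω, e ω a * e ω b ∂μ) :=
        Finset.sum_congr rfl fun i _ => Finset.sum_congr rfl fun j _ => h2 i j
      rw [h2']
      rw [sum4_swap fun i j a b => ((U.transpose * U) i j * (M i a * M j b)) *
          (β ^ 2 * ∫ ω, e ω a * e ω b ∂μ)]
      have h3 : ∀ a b : Fin n, (∑ i, ∑ j, ((U.transpose * U) i j * (M i a * M j b)) *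
          (β ^ 2 * ∫ ω, e ω a * e ω b ∂μ))
          = (1 : Matrix (Fin n) (Fin n) ℝ) a b * (β ^ 2 * ∫ ω, e ω a * e ω b ∂μ) := by
        intro a b
        rw [← hkey a b, Finset.sum_mul]
        exact Finset.sum_congr rfl fun i _ => (Finset.sum_mul _ _ _).symm
      have h3' : (∑ a, ∑ b, ∑ i, ∑ j, ((U.transpose * U) i j * (M i a * M j b)) *
          (β ^ 2 * ∫ ω, e ω a * e ω b ∂μ))
          = ∑ a, ∑ b, (1 : Matrix (Fin n) (Fin n) ℝ) a b *
              (β ^ 2 * ∫ ω, e ω a * e ω b ∂μ) :=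
        Finset.sum_congr rfl fun a _ => Finset.sum_congr rfl fun b _ => h3 a b
      rw [h3', Finset.mul_sum]
      refine Finset.sum_congr rfl fun a _ => ?_
      rw [Finset.sum_eq_single a]
      · simp [Matrix.one_apply]
      · intro b _ hba
        simp [Matrix.one_apply, Ne.symm hba]
      · simp
  -- finish
  have hesum : ∫ ω, (∑ i, (e ω i) ^ 2) ∂μ = ∑ a, ∫ ω, e ω a * e ω a ∂μ := by
    rw [integral_finset_sum _ fun a _ => (he2 a).integrable_sq]
    exact Finset.sum_congr rfl fun a _ => by simp [sq]
  calc (1 / (n : ℝ)) * ∫ ω,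
        (∑ i, X ω i * (W ω i - β * (W ω i + (M.mulVec (e ω)) i))) ^ 2 ∂μ
      = (1 / (n : ℝ)) * ∫ ω, (∑ i, X ω i * Y ω i) ^ 2 ∂μ := by
        have hfun : (fun ω => (∑ i, X ω i *
            (W ω i - β * (W ω i + (M.mulVec (e ω)) i))) ^ 2)
            = fun ω => (∑ i, X ω i * Y ω i) ^ 2 := funext fun ω => by rw [hrw ω]
        rw [hfun]
    _ = (1 / (n : ℝ)) * ((1 - β) ^ 2 * σW ^ 2 * (U.transpose * U).trace
          + β ^ 2 * ∑ a, ∫ ω, e ω a * e ω a ∂μ) := by rw [hmain, hsplit]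
    _ = (1 - β) ^ 2 * σW ^ 2 * (U.transpose * U).trace / n +
        β ^ 2 * ((1 / (n : ℝ)) * ∫ ω, ∑ i, (e ω i) ^ 2 ∂μ) := by
        rw [hesum]; ring
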